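/- Let G be a looped simple graph all of whose connected components have at most two vertices. Then M(IAS(G)) is a regular matroid. Conversely, if G has a connected component with at least three vertices, then M(IAS(G)) has a minor isomorphic to the Fano matroid F₇ and hence is not regular. -/

import Mathlib

/-- The three column types of the matrix `IAS(G) = (I | A | I+A)`. -/
inductive GType : Type
  | phi | chi | psi
  deriving DecidableEq

instance instFintypeGType : Fintype GType where
  elems := {GType.phi, GType.chi, GType.psi}
  complete := by intro x; cases x <;> simp

/-- The column of `IAS(G) = (I | A(G) | I+A(G))` indexed by a ground set element of
`W(G) = V × {φ, χ, ψ}`. -/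
def iasCol {V : Type} [DecidableEq V] (A : Matrix V V (ZMod 2)) : V × GType → V → ZMod 2
  | (v, GType.phi) => fun w => if w = v then 1 else 0
  | (v, GType.chi) => fun w => A w v
  | (v, GType.psi) => fun w => (if w = v then 1 else 0) + A w v

/-- Independence in the binary matroid `M(IAS(G))`: a set of ground elements is independent
iff the corresponding columns of `IAS(G)` are linearly independent over `GF(2)`. -/
def IasIndep {V : Type} [DecidableEq V] (A : Matrix V V (ZMod 2))
    (S : Set (V × GType)) : Prop :=
  LinearIndependent (ZMod 2) (fun p : S => iasCol A p.1)

/-- A circuit of `M(IAS(G))`: a minimal dependent set. -/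
def IasCircuit {V : Type} [DecidableEq V] (A : Matrix V V (ZMod 2))
    (C : Set (V × GType)) : Prop :=
  ¬ IasIndep A C ∧ ∀ D : Set (V × GType), D ⊂ C → IasIndep A D

/-- The rank of a subset of the ground set of `M(IAS(G))`: the `GF(2)`-rank of the
corresponding set of columns of `IAS(G)`. -/
noncomputable def iasRk {V : Type} [Fintype V] [DecidableEq V] (A : Matrix V V (ZMod 2))
    (S : Set (V × GType)) : ℕ :=
  Module.finrank (ZMod 2) (Submodule.span (ZMod 2) (iasCol A '' S))

/-- Adjacency in the looped simple graph with adjacency matrix `A` (loops do not count). -/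
def GAdj {V : Type} (A : Matrix V V (ZMod 2)) (v w : V) : Prop :=
  v ≠ w ∧ A v w = 1

/-- The binary matroid represented by the columns `cols` is regular: it is representable
over every field (with the same independent sets). -/
def IsRegularRep {W V : Type} (cols : W → V → ZMod 2) : Prop :=
  ∀ (K : Type) [Field K], ∃ c : W → V → K,
    ∀ S : Set W,
      LinearIndependent K (fun p : S => c p.1) ↔
        LinearIndependent (ZMod 2) (fun p : S => cols p.1)

/-- The columns of the Fano matroid `F₇`: all seven nonzero vectors of `GF(2)³`
(the binary expansion of `i + 1`). -/
def fanoCol (i : Fin 7) (j : Fin 3) : ZMod 2 :=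
  ((((i : ℕ) + 1) / 2 ^ (j : ℕ)) % 2 : ℕ)

/-- The binary matroid represented by `cols` has a minor isomorphic to the Fano matroid:
after contracting a set `C` (i.e. passing to the quotient by the span of its columns),
seven of the remaining elements represent `F₇`. -/
def HasFanoMinorRep {W V : Type} [Fintype V] (cols : W → V → ZMod 2) : Prop :=
  ∃ (C : Set W) (e : Fin 7 → W), Function.Injective e ∧ (∀ i, e i ∉ C) ∧
    ∀ S : Set (Fin 7),
      LinearIndependent (ZMod 2) (fun p : S => fanoCol p.1) ↔
        LinearIndependent (ZMod 2)
          (fun p : S =>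
            (Submodule.span (ZMod 2) (cols '' C)).mkQ (cols (e p.1)))

set_option linter.unusedSectionVars false

section Aux

open Submodule

section Generic
variable {F : Type} [Field F] {M : Type} [AddCommGroup M] [Module F M] {ι : Type}

lemma dep3' (a b c : M) (s t r : F) (hs : s ≠ 0)
    (h : s • a + t • b + r • c = 0) : ¬ LinearIndependent F ![a, b, c] := by
  rw [Fintype.not_linearIndependent_iff]
  refine ⟨![s, t, r], ?_, ⟨0, hs⟩⟩
  simpa [Fin.sum_univ_three] using h

lemma triple_coeffs {a b c : M} (h : LinearIndependent F ![a, b, c]) (s t r : F)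
    (hrel : s • a + t • b + r • c = 0) : s = 0 ∧ t = 0 ∧ r = 0 := by
  have := Fintype.linearIndependent_iff.1 h ![s, t, r] (by
    simpa [Fin.sum_univ_three] using hrel)
  exact ⟨this 0, this 1, this 2⟩

lemma pair_coeffs {a b : M} (h : LinearIndependent F ![a, b]) (s t : F)
    (hrel : s • a + t • b = 0) : s = 0 ∧ t = 0 :=
  LinearIndependent.pair_iff.1 h s t hrel

lemma pair_symm {a b : M} (h : LinearIndependent F ![a, b]) :
    LinearIndependent F ![b, a] := by
  rw [LinearIndependent.pair_iff]
  intro s t hrel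
  have := pair_coeffs h t s (by rw [← hrel]; abel)
  exact ⟨this.2, this.1⟩

/-- Block decomposition of linear independence. -/
lemma blockIndep {B V : Type} [DecidableEq B] (π : V → B) (s : ι → B)
    (f : ι → V → F) (hsupp : ∀ i v, f i v ≠ 0 → π v = s i) :
    LinearIndependent F f ↔ ∀ b : B, LinearIndependent F (fun i : {i // s i = b} => f i) := by
  constructor
  · exact fun h b => h.comp Subtype.val Subtype.val_injective
  · intro hb
    rw [linearIndependent_iff']
    intro t g hg i hi
    set b := s i with hbdef
    let P : (V → F) →ₗ[F] (V → F) :=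
      { toFun := fun x v => if π v = b then x v else 0
        map_add' := by intro x y; funext v; by_cases h : π v = b <;> simp [h]
        map_smul' := by intro c x; funext v; by_cases h : π v = b <;> simp [h] }
    have hP : ∀ j, P (f j) = if s j = b then f j else 0 := by
      intro j
      funext v
      by_cases hv : f j v = 0
      · by_cases h1 : π v = b <;> by_cases h2 : s j = b <;> simp [P, h1, h2, hv]
      · have := hsupp j v hv
        by_cases h2 : s j = b
        · simp [P, this, h2]
        · have : π v ≠ b := this ▸ h2
          simp [P, this, h2]
    have h1 : ∑ j ∈ t, g j • (if s j = b then f j else 0) = 0 := by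
      simp_rw [← hP, ← map_smul, ← map_sum, hg, map_zero]
    have hsum : ∑ j ∈ t.filter (fun j => s j = b), g j • f j = 0 := by
      rw [Finset.sum_filter]
      simp_rw [smul_ite, smul_zero] at h1
      exact h1
    have hfib := linearIndependent_iff'.1 (hb b) (t.subtype (fun j => s j = b))
      (fun q => g q.1)
    have hsum2 : ∑ q ∈ t.subtype (fun j => s j = b), g q.1 • f q.1 = 0 := by
      rw [Finset.sum_subtype_eq_sum_filter (fun a => g a • f a)]
      exact hsum
    exact hfib hsum2 ⟨i, rfl⟩ (Finset.mem_subtype.2 hi)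

lemma char1 {u : M} (f : ι → M) (hf : ∀ i, f i = 0 ∨ f i = u) :
    LinearIndependent F f ↔ (∀ i, f i ≠ 0) ∧ (∀ i j : ι, i = j) := by
  constructor
  · intro h
    refine ⟨h.ne_zero, fun i j => h.injective ?_⟩
    rcases hf i with hi | hi
    · exact absurd hi (h.ne_zero i)
    rcases hf j with hj | hj
    · exact absurd hj (h.ne_zero j)
    rw [hi, hj]
  · rintro ⟨h0, hsub⟩
    rcases isEmpty_or_nonempty ι with hι | ⟨⟨i0⟩⟩
    · exact linearIndependent_empty_type
    · haveI : Unique ι := ⟨⟨i0⟩, fun j => hsub j i0⟩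
      exact LinearIndependent.of_subsingleton default (h0 _)

lemma char2 {u v : M} (huv : LinearIndependent F ![u, v]) (f : ι → M)
    (hf : ∀ i, f i = 0 ∨ f i = u ∨ f i = v ∨ f i = u + v) :
    LinearIndependent F f ↔
      (∀ i, f i ≠ 0) ∧ Function.Injective f ∧ (∀ i j k : ι, i = j ∨ i = k ∨ j = k) := by
  classical
  have hu0 : u ≠ 0 := fun h => one_ne_zero (pair_coeffs huv 1 0 (by simp [h])).1
  have hv0 : v ≠ 0 := fun h => one_ne_zero (pair_coeffs huv 0 1 (by simp [h])).2
  have ind_uw : LinearIndependent F ![u, u + v] := by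
    rw [LinearIndependent.pair_iff]
    intro s t h
    have h' : (s + t) • u + t • v = 0 := by rw [← h]; module
    have := pair_coeffs huv _ _ h'
    have ht := this.2
    have hs := this.1
    rw [ht, add_zero] at hs
    exact ⟨hs, ht⟩
  have ind_vw : LinearIndependent F ![v, u + v] := by
    rw [LinearIndependent.pair_iff]
    intro s t h
    have h' : t • u + (s + t) • v = 0 := by rw [← h]; module
    have := pair_coeffs huv _ _ h'
    have ht := this.1
    have hs := this.2
    rw [ht, add_zero] at hs
    exact ⟨hs, ht⟩
  constructor
  · intro h
    refine ⟨h.ne_zero, h.injective, ?_⟩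
    intro i j k
    by_contra hcon
    push_neg at hcon
    obtain ⟨hij, hik, hjk⟩ := hcon
    have hind3 : LinearIndependent F ![f i, f j, f k] := by
      have := h.comp ![i, j, k] (by
        intro a b hab
        fin_cases a <;> fin_cases b <;> simp_all)
      convert this using 1
      funext m; fin_cases m <;> rfl
    have hne : f i ≠ f j := fun he => hij (h.injective he)
    have hne2 : f i ≠ f k := fun he => hik (h.injective he)
    have hne3 : f j ≠ f k := fun he => hjk (h.injective he)
    rcases (hf i).resolve_left (h.ne_zero i) with hi | hi | hi <;>
      rcases (hf j).resolve_left (h.ne_zero j) with hj | hj | hj <;>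
        rcases (hf k).resolve_left (h.ne_zero k) with hk | hk | hk <;>
          first
            | exact hne (hi.trans hj.symm)
            | exact hne2 (hi.trans hk.symm)
            | exact hne3 (hj.trans hk.symm)
            | (rw [hi, hj, hk] at hind3
               first
                 | exact dep3' _ _ _ 1 1 (-1) one_ne_zero (by module) hind3
                 | exact dep3' _ _ _ 1 (-1) 1 one_ne_zero (by module) hind3
                 | exact dep3' _ _ _ (-1) 1 1 (neg_ne_zero.2 one_ne_zero) (by module) hind3)
  · rintro ⟨h0, hinj, hcard⟩
    rcases isEmpty_or_nonempty ι with hι | ⟨⟨i0⟩⟩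
    · exact linearIndependent_empty_type
    by_cases htwo : ∃ j, j ≠ i0
    · obtain ⟨j0, hj0⟩ := htwo
      have hall : ∀ k, k = i0 ∨ k = j0 := by
        intro k
        rcases hcard i0 j0 k with h | h | h
        · exact absurd h.symm hj0
        · exact Or.inl h.symm
        · exact Or.inr h.symm
      let eqv : Fin 2 ≃ ι :=
        { toFun := ![i0, j0]
          invFun := fun k => if k = i0 then 0 else 1
          left_inv := by
            intro m
            fin_cases m
            · simp
            · simp [hj0]
          right_inv := by
            intro k
            rcases hall k with h | h <;> subst h <;> simp [hj0] }
      rw [← linearIndependent_equiv eqv]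
      have hrw : f ∘ eqv = ![f i0, f j0] := by
        funext m; fin_cases m <;> rfl
      rw [hrw]
      have hne : f i0 ≠ f j0 := fun h => hj0 (hinj h).symm
      rcases (hf i0).resolve_left (h0 i0) with hi | hi | hi <;>
        rcases (hf j0).resolve_left (h0 j0) with hj | hj | hj <;>
          rw [hi, hj] <;> rw [hi, hj] at hne <;>
            first
              | exact absurd rfl hne
              | exact huv
              | exact ind_uw
              | exact ind_vw
              | exact pair_symm huv
              | exact pair_symm ind_uw
              | exact pair_symm ind_vw
    · push_neg at htwo
      haveI : Unique ι := ⟨⟨i0⟩, htwo⟩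
      exact LinearIndependent.of_subsingleton default (h0 _)

end Generic

section Generic2
variable {F : Type} [Field F] {M : Type} [AddCommGroup M] [Module F M] {ι κ : Type}

open Submodule

lemma quotient_indep_iff (f : ι → M) (g : κ → M) :
    LinearIndependent F (fun i => (span F (Set.range g)).mkQ (f i)) ↔
      LinearIndependent F f ∧
        Disjoint (span F (Set.range f)) (span F (Set.range g)) := by
  constructor
  · intro h
    have hf : LinearIndependent F f := h.of_comp (span F (Set.range g)).mkQ
    refine ⟨hf, ?_⟩
    rw [Submodule.disjoint_def]
    intro m hmf hmg
    obtain ⟨l, hl⟩ := Finsupp.mem_span_range_iff_exists_finsupp.1 hmf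
    have hl' : Finsupp.linearCombination F f l = m := by
      rw [Finsupp.linearCombination_apply]; exact hl
    have hmk : Finsupp.linearCombination F
        (fun i => (span F (Set.range g)).mkQ (f i)) l = 0 := by
      have h2 := Finsupp.apply_linearCombination F ((span F (Set.range g)).mkQ) f l
      rw [hl'] at h2
      have h3 : (Finsupp.linearCombination F fun i => (span F (Set.range g)).mkQ (f i)) l =
          (span F (Set.range g)).mkQ m := h2.symm
      rw [h3]
      exact (Submodule.Quotient.mk_eq_zero _).2 hmg
    have : l = 0 := linearIndependent_iff.1 h l hmk
    rw [← hl', this, map_zero]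
  · rintro ⟨hf, hdisj⟩
    rw [linearIndependent_iff]
    intro l hl
    have hmk : (span F (Set.range g)).mkQ (Finsupp.linearCombination F f l) = 0 := by
      have h2 := Finsupp.apply_linearCombination F ((span F (Set.range g)).mkQ) f l
      rw [h2]; exact hl
    have hmem : Finsupp.linearCombination F f l ∈ span F (Set.range g) := by
      rwa [← Submodule.ker_mkQ (span F (Set.range g)), LinearMap.mem_ker]
    have hmem2 : Finsupp.linearCombination F f l ∈ span F (Set.range f) := by
      rw [← Finsupp.range_linearCombination]
      exact ⟨l, rfl⟩
    have h0 : Finsupp.linearCombination F f l = 0 :=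
      Submodule.disjoint_def.1 hdisj _ hmem2 hmem
    exact linearIndependent_iff.1 hf l h0

lemma union_indep_iff {W : Type} (cols : W → M) (C : Set W)
    (hC : LinearIndependent F (fun q : C => cols q.1))
    (e : ι → W) (S : Set ι) (heinj : Function.Injective e) (heC : ∀ i, e i ∉ C) :
    LinearIndependent F (fun p : S => (span F (cols '' C)).mkQ (cols (e p.1))) ↔
      LinearIndependent F (fun w : ((e '' S ∪ C) : Set W) => cols w.1) := by
  classical
  have hrg : cols '' C = Set.range (fun q : C => cols q.1) := Set.image_eq_range cols C
  -- reindex the union by a sum type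
  let eqv : (↥S ⊕ ↥C) ≃ ↥((e '' S ∪ C : Set W)) :=
    Equiv.ofBijective
      (fun a => match a with
        | Sum.inl p => ⟨e p.1, Or.inl ⟨p.1, p.2, rfl⟩⟩
        | Sum.inr q => ⟨q.1, Or.inr q.2⟩)
      (by
        constructor
        · rintro (p | q) (p' | q') hpq
          · simp only [Subtype.mk.injEq] at hpq
            exact congrArg Sum.inl (Subtype.ext (heinj (Subtype.mk.inj hpq)))
          · simp only [Subtype.mk.injEq] at hpq
            exact absurd ((Subtype.mk.inj hpq) ▸ q'.2) (heC p.1)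
          · simp only [Subtype.mk.injEq] at hpq
            exact absurd ((Subtype.mk.inj hpq) ▸ q.2) (heC p'.1)
          · simp only [Subtype.mk.injEq] at hpq
            exact congrArg Sum.inr (Subtype.ext (Subtype.mk.inj hpq))
        · rintro ⟨w, hw | hwC⟩
          · obtain ⟨i, hiS, rfl⟩ := hw
            exact ⟨Sum.inl ⟨i, hiS⟩, rfl⟩
          · exact ⟨Sum.inr ⟨w, hwC⟩, rfl⟩)
  have hcompose : (fun w : ((e '' S ∪ C) : Set W) => cols w.1) ∘ eqv =
      Sum.elim (fun p : S => cols (e p.1)) (fun q : C => cols q.1) := by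
    funext a
    rcases a with p | q <;> rfl
  rw [← linearIndependent_equiv eqv, hcompose, linearIndependent_sum]
  have h1 : Sum.elim (fun p : S => cols (e p.1)) (fun q : C => cols q.1) ∘ Sum.inl =
      fun p : S => cols (e p.1) := rfl
  have h2 : Sum.elim (fun p : S => cols (e p.1)) (fun q : C => cols q.1) ∘ Sum.inr =
      fun q : C => cols q.1 := rfl
  rw [h1, h2, hrg, quotient_indep_iff]
  constructor
  · rintro ⟨h, hd⟩; exact ⟨h, hC, hd⟩
  · rintro ⟨h, _, hd⟩; exact ⟨h, hd⟩

lemma indep_pair_set_iff [DecidableEq ι] {i j : ι} (hij : i ≠ j) (g : ι → M) :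
    LinearIndependent F (fun p : ({i, j} : Set ι) => g p.1) ↔
      LinearIndependent F ![g i, g j] := by
  have hmi : i ∈ ({i, j} : Set ι) := by simp
  have hmj : j ∈ ({i, j} : Set ι) := by simp
  let eqv : Fin 2 ≃ ({i, j} : Set ι) :=
    { toFun := ![⟨i, hmi⟩, ⟨j, hmj⟩]
      invFun := fun p => if p.1 = i then 0 else 1
      left_inv := by
        intro m
        fin_cases m
        · simp
        · simp [Ne.symm hij]
      right_inv := by
        rintro ⟨p, hp⟩
        simp only [Set.mem_insert_iff, Set.mem_singleton_iff] at hp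
        rcases hp with rfl | rfl
        · simp
        · simp [Ne.symm hij] }
  have hcomp : (fun p : ({i, j} : Set ι) => g p.1) ∘ eqv = ![g i, g j] := by
    funext m; fin_cases m <;> rfl
  rw [← linearIndependent_equiv eqv, hcomp]

lemma indep_triple_set_iff [DecidableEq ι] {i j k : ι} (hij : i ≠ j) (hik : i ≠ k)
    (hjk : j ≠ k) (g : ι → M) :
    LinearIndependent F (fun p : ({i, j, k} : Set ι) => g p.1) ↔
      LinearIndependent F ![g i, g j, g k] := by
  have hmi : i ∈ ({i, j, k} : Set ι) := by simp
  have hmj : j ∈ ({i, j, k} : Set ι) := by simp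
  have hmk : k ∈ ({i, j, k} : Set ι) := by simp
  let eqv : Fin 3 ≃ ({i, j, k} : Set ι) :=
    { toFun := ![⟨i, hmi⟩, ⟨j, hmj⟩, ⟨k, hmk⟩]
      invFun := fun p => if p.1 = i then 0 else if p.1 = j then 1 else 2
      left_inv := by
        intro m
        fin_cases m
        · simp
        · simp [Ne.symm hij]
        · simp [Ne.symm hik, Ne.symm hjk]
      right_inv := by
        rintro ⟨p, hp⟩
        simp only [Set.mem_insert_iff, Set.mem_singleton_iff] at hp
        rcases hp with rfl | rfl | rfl
        · simp
        · simp [Ne.symm hij]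
        · simp [Ne.symm hik, Ne.symm hjk] }
  have hcomp : (fun p : ({i, j, k} : Set ι) => g p.1) ∘ eqv = ![g i, g j, g k] := by
    funext m; fin_cases m <;> rfl
  rw [← linearIndependent_equiv eqv, hcomp]

lemma three_rel {a b c : M} (hab : LinearIndependent F ![a, b])
    (hac : LinearIndependent F ![a, c]) (hbc : LinearIndependent F ![b, c])
    (hdep : ¬ LinearIndependent F ![a, b, c]) :
    ∃ s t r : F, s ≠ 0 ∧ t ≠ 0 ∧ r ≠ 0 ∧ s • a + t • b + r • c = 0 := by
  rw [Fintype.not_linearIndependent_iff] at hdep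
  obtain ⟨g, hg, m, hm⟩ := hdep
  rw [Fin.sum_univ_three] at hg
  simp only [Matrix.cons_val_zero, Matrix.cons_val_one, Matrix.head_cons,
    Matrix.cons_val_two, Matrix.tail_cons] at hg
  have hr : g 2 ≠ 0 := by
    intro h0
    rw [h0, zero_smul, add_zero] at hg
    obtain ⟨h1, h2⟩ := pair_coeffs hab _ _ hg
    fin_cases m <;> simp_all
  have hsne : g 0 ≠ 0 := by
    intro h0
    rw [h0, zero_smul, zero_add] at hg
    obtain ⟨h1, h2⟩ := pair_coeffs hbc _ _ hg
    exact hr h2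
  have htne : g 1 ≠ 0 := by
    intro h0
    rw [h0, zero_smul, add_zero] at hg
    obtain ⟨h1, h2⟩ := pair_coeffs hac _ _ hg
    exact hr h2
  exact ⟨g 0, g 1, g 2, hsne, htne, hr, hg⟩

lemma two_combo {a b c : M} (hab : LinearIndependent F ![a, b])
    (hac : LinearIndependent F ![a, c]) (hbc : LinearIndependent F ![b, c])
    (hdep : ¬ LinearIndependent F ![a, b, c]) :
    ∃ α β : F, α ≠ 0 ∧ β ≠ 0 ∧ c = α • a + β • b := by
  obtain ⟨s, t, r, hs, ht, hr, hrel⟩ := three_rel hab hac hbc hdep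
  refine ⟨-s / r, -t / r, div_ne_zero (neg_ne_zero.2 hs) hr,
    div_ne_zero (neg_ne_zero.2 ht) hr, ?_⟩
  have hs1 : r • ((-s / r) • a) = (-s) • a := by
    rw [smul_smul, mul_comm, div_mul_cancel₀ _ hr]
  have hs2 : r • ((-t / r) • b) = (-t) • b := by
    rw [smul_smul, mul_comm, div_mul_cancel₀ _ hr]
  have h1 : r • c = r • ((-s / r) • a + (-t / r) • b) := by
    rw [smul_add, hs1, hs2]
    linear_combination (norm := module) hrel
  exact smul_right_injective M hr h1

end Generic2

section Part1

open Relation Submodule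

variable {V : Type} [Fintype V] [DecidableEq V]

/-- the connected component of a vertex -/
def gcomp (A : Matrix V V (ZMod 2)) (v : V) : Set V :=
  {w : V | Relation.ReflTransGen (GAdj A) v w}

lemma gadj_symm {A : Matrix V V (ZMod 2)} (hA : A.IsSymm) : Symmetric (GAdj A) :=
  fun _ _ h => ⟨h.1.symm, by rw [hA.apply]; exact h.2⟩

lemma gcomp_eq {A : Matrix V V (ZMod 2)} (hA : A.IsSymm) {a b : V}
    (h : Relation.ReflTransGen (GAdj A) a b) : gcomp A a = gcomp A b := by
  haveI : Std.Symm (GAdj A) := ⟨fun _ _ h => gadj_symm hA h⟩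
  have hsym : ∀ {a b : V}, Relation.ReflTransGen (GAdj A) a b →
      Relation.ReflTransGen (GAdj A) b a := fun h => Std.Symm.symm _ _ h
  ext w
  exact ⟨fun hw => (hsym h).trans hw, fun hw => h.trans hw⟩

lemma zmod2_cases (a : ZMod 2) : a = 0 ∨ a = 1 :=
  (by decide : ∀ a : ZMod 2, a = 0 ∨ a = 1) a

lemma col_supp {A : Matrix V V (ZMod 2)} (hA : A.IsSymm) (p : V × GType) (w : V)
    (h : iasCol A p w ≠ 0) : gcomp A w = gcomp A p.1 := by
  have key : w = p.1 ∨ A w p.1 = 1 := by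
    obtain ⟨v, t⟩ := p
    cases t <;> simp only [iasCol] at h ⊢
    · by_cases hw : w = v
      · exact Or.inl hw
      · simp [hw] at h
    · exact Or.inr ((zmod2_cases _).resolve_left h)
    · by_cases hw : w = v
      · exact Or.inl hw
      · simp only [hw, if_false, zero_add] at h
        exact Or.inr ((zmod2_cases _).resolve_left h)
  rcases key with h1 | h1
  · rw [h1]
  · by_cases hw : w = p.1
    · rw [hw]
    · exact gcomp_eq hA (Relation.ReflTransGen.single ⟨hw, h1⟩)

lemma mem_gcomp_self (A : Matrix V V (ZMod 2)) (v : V) : v ∈ gcomp A v :=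
  Relation.ReflTransGen.refl

/-- the entrywise lift of a `GF(2)` vector to a field `K` -/
def liftF (K : Type) [Field K] (x : V → ZMod 2) : V → K := fun w => ((x w).val : K)

variable {K : Type} [Field K]

lemma liftF_zero : liftF K (0 : V → ZMod 2) = 0 := by
  funext w; simp [liftF]

lemma liftF_val_eq {a b : ZMod 2} (h : ((a.val : K)) = (b.val : K)) : a = b := by
  rcases zmod2_cases a with ha | ha <;> rcases zmod2_cases b with hb | hb <;>
      subst ha <;> subst hb <;> first
    | rfl
    | (rw [ZMod.val_zero, ZMod.val_one] at h; simp at h)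

lemma liftF_inj : Function.Injective (liftF K (V := V)) := by
  intro x y h
  funext w
  exact liftF_val_eq (congrFun h w)

lemma liftF_zero_iff {x : V → ZMod 2} : liftF K x = 0 ↔ x = 0 := by
  constructor
  · intro h; exact liftF_inj (h.trans liftF_zero.symm)
  · rintro rfl; exact liftF_zero

lemma liftF_single (x : V) :
    liftF K (fun w => if w = x then (1 : ZMod 2) else 0) =
      fun w => if w = x then (1:K) else 0 := by
  funext w
  simp only [liftF]
  by_cases h : w = x
  · rw [if_pos h, if_pos h, ZMod.val_one, Nat.cast_one]
  · rw [if_neg h, if_neg h, ZMod.val_zero, Nat.cast_zero]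

lemma liftF_double {x y : V} (hxy : x ≠ y) :
    liftF K ((fun w => if w = x then (1 : ZMod 2) else 0) + (fun w => if w = y then 1 else 0)) =
      (fun w => if w = x then (1:K) else 0) + fun w => if w = y then 1 else 0 := by
  funext w
  simp only [liftF, Pi.add_apply]
  by_cases h1 : w = x
  · subst h1
    rw [if_pos rfl, if_pos rfl, if_neg hxy, if_neg hxy, add_zero, add_zero, ZMod.val_one,
      Nat.cast_one]
  · by_cases h2 : w = y
    · rw [if_neg h1, if_neg h1, if_pos h2, if_pos h2, zero_add, zero_add, ZMod.val_one,
        Nat.cast_one]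
    · rw [if_neg h1, if_neg h1, if_neg h2, if_neg h2, add_zero, add_zero, ZMod.val_zero,
        Nat.cast_zero]

lemma basis_pair {F : Type} [Field F] {x y : V} (hxy : x ≠ y) :
    LinearIndependent F
      ![(fun w => if w = x then (1:F) else 0), (fun w => if w = y then 1 else 0)] := by
  rw [LinearIndependent.pair_iff]
  intro s t h
  constructor
  · have hx := congrFun h x
    simpa [hxy] using hx
  · have hy := congrFun h y
    simpa [Ne.symm hxy] using hy

set_option maxHeartbeats 1000000 in
lemma part1 (A : Matrix V V (ZMod 2)) (hA : A.IsSymm)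
    (hsmall : ∀ v : V, {w : V | Relation.ReflTransGen (GAdj A) v w}.ncard ≤ 2) :
    IsRegularRep (iasCol A) := by
  classical
  intro K _
  refine ⟨fun p => liftF K (iasCol A p), fun S => ?_⟩
  have hsupp2 : ∀ (p : ↥S) (w : V), iasCol A (p : V × GType) w ≠ 0 →
      gcomp A w = gcomp A (p : V × GType).1 := fun p w h => col_supp hA _ w h
  have hsuppK : ∀ (p : ↥S) (w : V), liftF K (iasCol A (p : V × GType)) w ≠ 0 →
      gcomp A w = gcomp A (p : V × GType).1 := by
    intro p w h
    refine hsupp2 p w fun h0 => h ?_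
    simp [liftF, h0]
  refine (blockIndep (gcomp A) (fun p : ↥S => gcomp A (p : V × GType).1)
      (fun p : ↥S => liftF K (iasCol A (p : V × GType))) hsuppK).trans
    (Iff.trans ?_ (blockIndep (gcomp A) (fun p : ↥S => gcomp A (p : V × GType).1)
      (fun p : ↥S => iasCol A (p : V × GType)) hsupp2).symm)
  apply forall_congr'
  intro b
  by_cases hb : ∃ p : ↥S, gcomp A (p : V × GType).1 = b
  case neg =>
    haveI : IsEmpty {p : ↥S // gcomp A (p : V × GType).1 = b} := ⟨fun q => hb ⟨q.1, q.2⟩⟩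
    exact iff_of_true linearIndependent_empty_type linearIndependent_empty_type
  case pos =>
  obtain ⟨p0, hp0⟩ := hb
  set v0 := (p0 : V × GType).1 with hv0def
  have hv0b : v0 ∈ b := by rw [← hp0]; exact mem_gcomp_self A v0
  have hncard : b.ncard ≤ 2 := by
    have h2 : (gcomp A v0).ncard ≤ 2 := hsmall v0
    rwa [hp0] at h2
  have hfinb : b.Finite := b.toFinite
  have hcolsupp : ∀ (q : {p : ↥S // gcomp A (p : V × GType).1 = b}) (w : V),
      iasCol A ((q : ↥S) : V × GType) w ≠ 0 → w ∈ b := by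
    intro q w h
    have h1 := hsupp2 q.1 w h
    rw [q.2] at h1
    rw [← h1]
    exact mem_gcomp_self A w
  by_cases hone : b ⊆ {v0}
  · -- one-vertex component
    have hbeq : b = {v0} := subset_antisymm hone (by simp [hv0b])
    have hmem2 : ∀ q : {p : ↥S // gcomp A (p : V × GType).1 = b},
        iasCol A ((q : ↥S) : V × GType) = 0 ∨
          iasCol A ((q : ↥S) : V × GType) = fun w => if w = v0 then 1 else 0 := by
      intro q
      have hzero : ∀ w, w ≠ v0 → iasCol A ((q : ↥S) : V × GType) w = 0 := by
        intro w hw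
        by_contra h
        have := hcolsupp q w h
        rw [hbeq] at this
        exact hw this
      have hcol : iasCol A ((q : ↥S) : V × GType) =
          fun w => if w = v0 then iasCol A ((q : ↥S) : V × GType) v0 else 0 := by
        funext w
        by_cases hw : w = v0
        · subst hw; simp
        · simp [hw, hzero w hw]
      rcases zmod2_cases (iasCol A ((q : ↥S) : V × GType) v0) with h0 | h1
      · left; rw [hcol, h0]; funext w; simp
      · right; rw [hcol, h1]
    have hmemK : ∀ q : {p : ↥S // gcomp A (p : V × GType).1 = b},
        liftF K (iasCol A ((q : ↥S) : V × GType)) = 0 ∨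
          liftF K (iasCol A ((q : ↥S) : V × GType)) = fun w => if w = v0 then 1 else 0 := by
      intro q
      rcases hmem2 q with h | h <;> rw [h]
      · exact Or.inl liftF_zero
      · exact Or.inr (liftF_single v0)
    refine (char1 _ hmemK).trans (Iff.trans ?_ (char1 _ hmem2).symm)
    exact and_congr (forall_congr' fun q => not_congr liftF_zero_iff) Iff.rfl
  · -- two-vertex component
    obtain ⟨y, hyb, hyne⟩ := Set.not_subset.1 hone
    have hne : v0 ≠ y := fun h => hyne (by simp [h.symm])
    have hbeq : b = {v0, y} := by
      apply subset_antisymm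
      · intro z hz
        by_contra hzc
        simp only [Set.mem_insert_iff, Set.mem_singleton_iff, not_or] at hzc
        have h3 : ({z, v0, y} : Set V).ncard = 3 := by
          rw [Set.ncard_insert_of_notMem (by simp [hzc.1, hzc.2]) (Set.toFinite _),
            Set.ncard_pair hne]
        have hsub : ({z, v0, y} : Set V) ⊆ b := by
          intro w hw
          rcases hw with rfl | rfl | rfl
          · exact hz
          · exact hv0b
          · exact hyb
        have := Set.ncard_le_ncard hsub hfinb
        omega
      · intro z hz
        rcases hz with rfl | rfl
        · exact hv0b
        · exact hyb
    have hmem2 : ∀ q : {p : ↥S // gcomp A (p : V × GType).1 = b},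
        iasCol A ((q : ↥S) : V × GType) = 0 ∨
          iasCol A ((q : ↥S) : V × GType) = (fun w => if w = v0 then 1 else 0) ∨
          iasCol A ((q : ↥S) : V × GType) = (fun w => if w = y then 1 else 0) ∨
          iasCol A ((q : ↥S) : V × GType) =
            (fun w => if w = v0 then 1 else 0) + fun w => if w = y then 1 else 0 := by
      intro q
      set col := iasCol A ((q : ↥S) : V × GType) with hcoldef
      have hzero : ∀ w, w ≠ v0 → w ≠ y → col w = 0 := by
        intro w hw1 hw2
        by_contra h
        have := hcolsupp q w h
        rw [hbeq] at this
        rcases this with h' | h'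
        · exact hw1 h'
        · exact hw2 h'
      rcases zmod2_cases (col v0) with h0 | h0 <;> rcases zmod2_cases (col y) with h1 | h1
      · left
        funext w
        by_cases hw1 : w = v0
        · subst hw1; exact h0
        by_cases hw2 : w = y
        · subst hw2; exact h1
        · exact hzero w hw1 hw2
      · right; right; left
        funext w
        by_cases hw1 : w = v0
        · subst hw1; simp [hne, h0]
        by_cases hw2 : w = y
        · subst hw2; simp [h1]
        · simp [hw2, hzero w hw1 hw2]
      · right; left
        funext w
        by_cases hw1 : w = v0
        · subst hw1; simp [h0]
        by_cases hw2 : w = y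
        · subst hw2; simp [Ne.symm hne, h1]
        · simp [hw1, hzero w hw1 hw2]
      · right; right; right
        funext w
        by_cases hw1 : w = v0
        · subst hw1; simp [hne, h0]
        by_cases hw2 : w = y
        · subst hw2; simp [Ne.symm hne, h1]
        · simp [hw1, hw2, hzero w hw1 hw2]
    have hmemK : ∀ q : {p : ↥S // gcomp A (p : V × GType).1 = b},
        liftF K (iasCol A ((q : ↥S) : V × GType)) = 0 ∨
          liftF K (iasCol A ((q : ↥S) : V × GType)) = (fun w => if w = v0 then 1 else 0) ∨
          liftF K (iasCol A ((q : ↥S) : V × GType)) = (fun w => if w = y then 1 else 0) ∨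
          liftF K (iasCol A ((q : ↥S) : V × GType)) =
            (fun w => if w = v0 then 1 else 0) + fun w => if w = y then 1 else 0 := by
      intro q
      rcases hmem2 q with h | h | h | h <;> rw [h]
      · exact Or.inl liftF_zero
      · exact Or.inr (Or.inl (liftF_single v0))
      · exact Or.inr (Or.inr (Or.inl (liftF_single y)))
      · exact Or.inr (Or.inr (Or.inr (liftF_double hne)))
    have hKi := char2 (F := K) (M := V → K)
      (ι := {p : ↥S // gcomp A (p : V × GType).1 = b})
      (basis_pair hne) (fun q => liftF K (iasCol A ((q : ↥S) : V × GType))) hmemK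
    have h2i := char2 (F := ZMod 2) (M := V → ZMod 2)
      (ι := {p : ↥S // gcomp A (p : V × GType).1 = b})
      (basis_pair hne) (fun q => iasCol A ((q : ↥S) : V × GType)) hmem2
    refine hKi.trans (Iff.trans ?_ h2i.symm)
    exact and_congr (forall_congr' fun q => not_congr liftF_zero_iff)
      (and_congr (Function.Injective.of_comp_iff liftF_inj _) Iff.rfl)

end Part1

section FanoNotRep
variable {F : Type} [Field F] {M : Type} [AddCommGroup M] [Module F M]

lemma fano_gf2_pair : ∀ i j : Fin 7, i ≠ j →
    ∀ g : Fin 2 → ZMod 2, (∑ m, g m • ![fanoCol i, fanoCol j] m) = 0 → ∀ m, g m = 0 := by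
  decide

lemma fano_gf2_013 : LinearIndependent (ZMod 2) ![fanoCol 0, fanoCol 1, fanoCol 3] :=
  Fintype.linearIndependent_iff.mpr (by decide)

lemma fano_not_rep (h2F : (2 : F) ≠ 0) (u : Fin 7 → M)
    (hrep : ∀ S : Set (Fin 7),
      LinearIndependent F (fun p : S => u p.1) ↔
        LinearIndependent (ZMod 2) (fun p : S => fanoCol p.1)) : False := by
  classical
  have pairQ : ∀ i j : Fin 7, i ≠ j → LinearIndependent F ![u i, u j] := by
    intro i j hij
    have hgf2 : LinearIndependent (ZMod 2) ![fanoCol i, fanoCol j] :=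
      Fintype.linearIndependent_iff.mpr (fano_gf2_pair i j hij)
    exact (indep_pair_set_iff hij u).1
      ((hrep {i, j}).2 ((indep_pair_set_iff hij fanoCol).2 hgf2))
  have depQ : ∀ i j k : Fin 7, i ≠ j → i ≠ k → j ≠ k →
      fanoCol i + fanoCol j + fanoCol k = 0 → ¬ LinearIndependent F ![u i, u j, u k] := by
    intro i j k hij hik hjk hsum hind
    have hQ := (hrep {i, j, k}).1 ((indep_triple_set_iff hij hik hjk u).2 hind)
    have hgf2 := (indep_triple_set_iff hij hik hjk fanoCol).1 hQ
    exact dep3' _ _ _ 1 1 1 one_ne_zero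
      (by rw [one_smul, one_smul, one_smul]; exact hsum) hgf2
  have indepQ013 : LinearIndependent F ![u 0, u 1, u 3] := by
    have := (hrep {0, 1, 3}).2
      ((indep_triple_set_iff (by decide) (by decide) (by decide) fanoCol).2 fano_gf2_013)
    exact (indep_triple_set_iff (by decide) (by decide) (by decide) u).1 this
  have combo : ∀ i j k : Fin 7, i ≠ j → i ≠ k → j ≠ k →
      fanoCol i + fanoCol j + fanoCol k = 0 →
      ∃ α β : F, α ≠ 0 ∧ β ≠ 0 ∧ u k = α • u i + β • u j := fun i j k hij hik hjk hsum =>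
    two_combo (pairQ i j hij) (pairQ i k hik) (pairQ j k hjk) (depQ i j k hij hik hjk hsum)
  obtain ⟨α1, β1, hα1, hβ1, h2⟩ := combo 0 1 2 (by decide) (by decide) (by decide) (by decide)
  obtain ⟨α2, β2, hα2, hβ2, h4⟩ := combo 0 3 4 (by decide) (by decide) (by decide) (by decide)
  obtain ⟨α3, β3, hα3, hβ3, h5⟩ := combo 1 3 5 (by decide) (by decide) (by decide) (by decide)
  obtain ⟨α4, β4, hα4, hβ4, h6a⟩ := combo 2 3 6 (by decide) (by decide) (by decide) (by decide)
  obtain ⟨α5, β5, hα5, hβ5, h6b⟩ := combo 0 5 6 (by decide) (by decide) (by decide) (by decide)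
  obtain ⟨α6, β6, hα6, hβ6, h6c⟩ := combo 1 4 6 (by decide) (by decide) (by decide) (by decide)
  obtain ⟨s, t, r, hs, ht, hr, hrel⟩ :=
    three_rel (pairQ 2 4 (by decide)) (pairQ 2 5 (by decide)) (pairQ 4 5 (by decide))
      (depQ 2 4 5 (by decide) (by decide) (by decide) (by decide))
  have E1 := triple_coeffs indepQ013 (α4 * α1 - α5) (α4 * β1 - β5 * α3) (β4 - β5 * β3)
    (by linear_combination (norm := module) (-α4 : F) • h2 + (β5 : F) • h5 + h6b - h6a)
  have E2 := triple_coeffs indepQ013 (α4 * α1 - β6 * α2) (α4 * β1 - α6) (β4 - β6 * β2)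
    (by linear_combination (norm := module) (-α4 : F) • h2 + (β6 : F) • h4 + h6c - h6a)
  have E3 := triple_coeffs indepQ013 (s * α1 + t * α2) (s * β1 + r * α3) (t * β2 + r * β3)
    (by linear_combination (norm := module) hrel - (s : F) • h2 - (t : F) • h4 - (r : F) • h5)
  have e12 := E1.2.1
  have e13 := E1.2.2
  have e21 := E2.1
  have e23 := E2.2.2
  obtain ⟨e31, e32, e33⟩ := E3
  have I1 : α4 * β1 * β3 = α3 * β4 := by linear_combination β3 * e12 - α3 * e13
  have I2 : α4 * α1 * β2 = α2 * β4 := by linear_combination β2 * e21 - α2 * e23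
  have M1 : r * (α4 * β1 * β3) + s * β1 * β4 = 0 := by
    linear_combination r * I1 + β4 * e32
  have M2 : t * (α4 * α1 * β2) + s * α1 * β4 = 0 := by
    linear_combination t * I2 + β4 * e31
  have final : (2 : F) * (r * α4 * α1 * β1 * β3) = 0 := by
    linear_combination α1 * M1 - β1 * M2 + α4 * α1 * β1 * e33
  exact (mul_ne_zero h2F (mul_ne_zero (mul_ne_zero (mul_ne_zero (mul_ne_zero hr hα4) hα1)
    hβ1) hβ3)) final

end FanoNotRep

section Part2

open Relation Submodule

variable {V : Type} [Fintype V] [DecidableEq V]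

lemma path_exists {A : Matrix V V (ZMod 2)} (hA : A.IsSymm)
    (hbig : ∃ v : V, 3 ≤ {w : V | Relation.ReflTransGen (GAdj A) v w}.ncard) :
    ∃ x y z : V, x ≠ y ∧ y ≠ z ∧ x ≠ z ∧ A x y = 1 ∧ A y z = 1 := by
  obtain ⟨v, hv⟩ := hbig
  have hv' : 3 ≤ (gcomp A v).ncard := hv
  have h2 : ∃ u ∈ gcomp A v, u ≠ v := by
    by_contra h
    push_neg at h
    have hsub : gcomp A v ⊆ {v} := fun u hu => h u hu
    have := Set.ncard_le_ncard hsub (Set.toFinite _)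
    rw [Set.ncard_singleton] at this
    omega
  obtain ⟨u, hu, huv⟩ := h2
  have hedge : ∃ m, GAdj A v m := by
    rcases Relation.ReflTransGen.cases_head hu with h | ⟨m, hm, _⟩
    · exact absurd h.symm huv
    · exact ⟨m, hm⟩
  obtain ⟨m, hvm⟩ := hedge
  have h3 : ∃ w ∈ gcomp A v, w ≠ v ∧ w ≠ m := by
    by_contra h
    push_neg at h
    have hsub : gcomp A v ⊆ {v, m} := by
      intro w hw
      by_cases h1 : w = v
      · exact Or.inl h1
      · exact Or.inr (h w hw h1)
    have hle := Set.ncard_le_ncard hsub (Set.toFinite _)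
    have h2' : ({v, m} : Set V).ncard ≤ 2 := by
      refine le_trans (Set.ncard_insert_le _ _) ?_
      rw [Set.ncard_singleton]
    omega
  obtain ⟨z0, hz0mem, hz0v, hz0m⟩ := h3
  have leave : ∀ w : V, Relation.ReflTransGen (GAdj A) v w → w ≠ v → w ≠ m →
      ∃ p q : V, (p = v ∨ p = m) ∧ q ≠ v ∧ q ≠ m ∧ GAdj A p q := by
    intro w hw
    induction hw with
    | refl => intro h _; exact absurd rfl h
    | @tail b w' h1 h2 ih =>
      intro hwv hwm
      by_cases hcv : b = v
      · exact ⟨v, w', Or.inl rfl, hwv, hwm, hcv ▸ h2⟩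
      · by_cases hcm : b = m
        · exact ⟨m, w', Or.inr rfl, hwv, hwm, hcm ▸ h2⟩
        · obtain ⟨p, q, hp, h3, h4, h5⟩ := ih hcv hcm
          exact ⟨p, q, hp, h3, h4, h5⟩
  obtain ⟨p, q, hp, hqv, hqm, hpq⟩ := leave z0 hz0mem hz0v hz0m
  rcases hp with hpv | hpm
  · subst hpv
    exact ⟨m, p, q, Ne.symm hvm.1, fun h => hqv h.symm, fun h => hqm h.symm,
      (gadj_symm hA hvm).2, hpq.2⟩
  · subst hpm
    exact ⟨v, p, q, hvm.1, fun h => hqm h.symm, fun h => hqv h.symm, hvm.2, hpq.2⟩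

set_option maxHeartbeats 2000000 in
lemma part2main (A : Matrix V V (ZMod 2)) (hA : A.IsSymm)
    (hbig : ∃ v : V, 3 ≤ {w : V | Relation.ReflTransGen (GAdj A) v w}.ncard) :
    HasFanoMinorRep (iasCol A) ∧ ¬ IsRegularRep (iasCol A) := by
  classical
  obtain ⟨x, y, z, hxy, hyz, hxz, hAxy, hAyz⟩ := path_exists hA hbig
  have hAyx : A y x = 1 := (hA.apply x y).trans hAxy
  have hAzy : A z y = 1 := (hA.apply y z).trans hAyz
  have hAzx : A z x = A x z := hA.apply x z
  set C : Set (V × GType) := {p | p.2 = GType.phi ∧ p.1 ∉ ({x, y, z} : Set V)} with hCdef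
  let qmap : (V → ZMod 2) →ₗ[ZMod 2] (Fin 3 → ZMod 2) :=
    { toFun := fun f => ![f x, f y, f z]
      map_add' := by intro a b; funext j; fin_cases j <;> simp
      map_smul' := by intro r a; funext j; fin_cases j <;> simp }
  have hqmap : ∀ g : V → ZMod 2, qmap g = ![g x, g y, g z] := fun g => rfl
  have hsle : span (ZMod 2) (iasCol A '' C) ≤ LinearMap.ker qmap := by
    rw [Submodule.span_le]
    rintro _ ⟨p, hp, rfl⟩
    obtain ⟨v, t⟩ := p
    obtain ⟨hphi, hnot⟩ := hp
    simp only at hphi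
    subst hphi
    rw [SetLike.mem_coe, LinearMap.mem_ker, hqmap]
    simp only [Set.mem_insert_iff, Set.mem_singleton_iff, not_or] at hnot
    funext j
    fin_cases j <;>
      simp [iasCol, Ne.symm hnot.1, Ne.symm hnot.2.1, Ne.symm hnot.2.2]
  have hkle : LinearMap.ker qmap ≤ span (ZMod 2) (iasCol A '' C) := by
    intro f hf
    rw [LinearMap.mem_ker, hqmap] at hf
    have hfx : f x = 0 := by have := congrFun hf 0; simpa using this
    have hfy : f y = 0 := by have := congrFun hf 1; simpa using this
    have hfz : f z = 0 := by have := congrFun hf 2; simpa using this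
    have hsum : f = ∑ v : V, f v • iasCol A (v, GType.phi) := by
      funext w
      rw [Finset.sum_apply]
      have hterm : ∀ v : V, (f v • iasCol A (v, GType.phi)) w = if w = v then f v else 0 := by
        intro v
        by_cases h : w = v <;> simp [iasCol, h]
      rw [Finset.sum_congr rfl (fun v _ => hterm v), Finset.sum_ite_eq]
      simp
    rw [hsum]
    apply Submodule.sum_mem
    intro v _
    by_cases hv : v ∈ ({x, y, z} : Set V)
    · simp only [Set.mem_insert_iff, Set.mem_singleton_iff] at hv
      rcases hv with rfl | rfl | rfl
      · rw [hfx, zero_smul]; exact Submodule.zero_mem _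
      · rw [hfy, zero_smul]; exact Submodule.zero_mem _
      · rw [hfz, zero_smul]; exact Submodule.zero_mem _
    · exact Submodule.smul_mem _ _ (Submodule.subset_span ⟨(v, GType.phi), ⟨rfl, hv⟩, rfl⟩)
  let e : Fin 7 → V × GType :=
    ![(x, GType.phi), (y, GType.phi),
      (if A x z = 0 then (if A x x = 1 then (x, GType.chi) else (x, GType.psi))
        else (if A z z = 0 then (z, GType.chi) else (z, GType.psi))),
      (z, GType.phi),
      (if A y y = 0 then (y, GType.chi) else (y, GType.psi)),
      (if A x z = 0 then (if A z z = 1 then (z, GType.chi) else (z, GType.psi))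
        else (if A x x = 0 then (x, GType.chi) else (x, GType.psi))),
      (if A y y = 1 then (y, GType.chi) else (y, GType.psi))]
  have hchi : ∀ v : V, qmap (iasCol A (v, GType.chi)) = ![A x v, A y v, A z v] := fun v => rfl
  have hpsi : ∀ v : V, qmap (iasCol A (v, GType.psi)) =
      ![(if x = v then 1 else 0) + A x v, (if y = v then 1 else 0) + A y v,
        (if z = v then 1 else 0) + A z v] := fun v => rfl
  have hphi' : ∀ v : V, qmap (iasCol A (v, GType.phi)) =
      ![if x = v then 1 else 0, if y = v then 1 else 0, if z = v then 1 else 0] := fun v => rfl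
  have hqe : ∀ i : Fin 7, qmap (iasCol A (e i)) = fanoCol i := by
    intro i
    fin_cases i
    · show qmap (iasCol A (x, GType.phi)) = fanoCol 0
      rw [hphi']
      funext j
      fin_cases j <;> simp [Ne.symm hxy, Ne.symm hxz] <;> decide
    · show qmap (iasCol A (y, GType.phi)) = fanoCol 1
      rw [hphi']
      funext j
      fin_cases j <;> simp [hxy, Ne.symm hyz] <;> decide
    · show qmap (iasCol A
        (if A x z = 0 then (if A x x = 1 then (x, GType.chi) else (x, GType.psi))
          else (if A z z = 0 then (z, GType.chi) else (z, GType.psi)))) = fanoCol 2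
      by_cases ht : A x z = 0
      · rw [if_pos ht]
        by_cases hxx : A x x = 1
        · rw [if_pos hxx, hchi]
          funext j
          fin_cases j <;> simp [hxx, hAyx, hAzx, ht] <;> decide
        · have hxx0 : A x x = 0 := (zmod2_cases _).resolve_right hxx
          rw [if_neg hxx, hpsi]
          funext j
          fin_cases j <;> simp [hxx0, hAyx, hAzx, ht, Ne.symm hxy, Ne.symm hxz] <;> decide
      · have ht1 : A x z = 1 := (zmod2_cases _).resolve_left ht
        rw [if_neg ht]
        by_cases hzz : A z z = 0
        · rw [if_pos hzz, hchi]
          funext j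
          fin_cases j <;> simp [ht1, hAyz, hzz] <;> decide
        · have hzz1 : A z z = 1 := (zmod2_cases _).resolve_left hzz
          rw [if_neg hzz, hpsi]
          funext j
          fin_cases j <;> simp [ht1, hAyz, hzz1, hxz, hyz] <;> decide
    · show qmap (iasCol A (z, GType.phi)) = fanoCol 3
      rw [hphi']
      funext j
      fin_cases j <;> simp [hxz, hyz] <;> decide
    · show qmap (iasCol A
        (if A y y = 0 then (y, GType.chi) else (y, GType.psi))) = fanoCol 4
      by_cases hyy : A y y = 0
      · rw [if_pos hyy, hchi]
        funext j
        fin_cases j <;> simp [hAxy, hyy, hAzy] <;> decide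
      · have hyy1 : A y y = 1 := (zmod2_cases _).resolve_left hyy
        rw [if_neg hyy, hpsi]
        funext j
        fin_cases j <;> simp [hAxy, hyy1, hAzy, hxy, Ne.symm hyz] <;> decide
    · show qmap (iasCol A
        (if A x z = 0 then (if A z z = 1 then (z, GType.chi) else (z, GType.psi))
          else (if A x x = 0 then (x, GType.chi) else (x, GType.psi)))) = fanoCol 5
      by_cases ht : A x z = 0
      · rw [if_pos ht]
        by_cases hzz : A z z = 1
        · rw [if_pos hzz, hchi]
          funext j
          fin_cases j <;> simp [ht, hAyz, hzz] <;> decide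
        · have hzz0 : A z z = 0 := (zmod2_cases _).resolve_right hzz
          rw [if_neg hzz, hpsi]
          funext j
          fin_cases j <;> simp [ht, hAyz, hzz0, hxz, hyz] <;> decide
      · have ht1 : A x z = 1 := (zmod2_cases _).resolve_left ht
        rw [if_neg ht]
        by_cases hxx : A x x = 0
        · rw [if_pos hxx, hchi]
          funext j
          fin_cases j <;> simp [hxx, hAyx, hAzx, ht1] <;> decide
        · have hxx1 : A x x = 1 := (zmod2_cases _).resolve_left hxx
          rw [if_neg hxx, hpsi]
          funext j
          fin_cases j <;> simp [hxx1, hAyx, hAzx, ht1, Ne.symm hxy, Ne.symm hxz] <;> decide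
    · show qmap (iasCol A
        (if A y y = 1 then (y, GType.chi) else (y, GType.psi))) = fanoCol 6
      by_cases hyy : A y y = 1
      · rw [if_pos hyy, hchi]
        funext j
        fin_cases j <;> simp [hAxy, hyy, hAzy] <;> decide
      · have hyy0 : A y y = 0 := (zmod2_cases _).resolve_right hyy
        rw [if_neg hyy, hpsi]
        funext j
        fin_cases j <;> simp [hAxy, hyy0, hAzy, hxy, Ne.symm hyz] <;> decide
  have hfano_inj : Function.Injective fanoCol := by decide
  have heinj : Function.Injective e := by
    intro i j hij
    apply hfano_inj
    rw [← hqe i, ← hqe j, hij]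
  have hvert : ∀ i, (e i).1 ∈ ({x, y, z} : Set V) := by
    intro i
    fin_cases i
    · exact Or.inl rfl
    · exact Or.inr (Or.inl rfl)
    · show (if A x z = 0 then (if A x x = 1 then (x, GType.chi) else (x, GType.psi))
          else (if A z z = 0 then (z, GType.chi) else (z, GType.psi))).1 ∈ ({x, y, z} : Set V)
      split_ifs <;> first | exact Or.inl rfl | exact Or.inr (Or.inr rfl)
    · exact Or.inr (Or.inr rfl)
    · show (if A y y = 0 then (y, GType.chi) else (y, GType.psi)).1 ∈ ({x, y, z} : Set V)
      split_ifs <;> exact Or.inr (Or.inl rfl)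
    · show (if A x z = 0 then (if A z z = 1 then (z, GType.chi) else (z, GType.psi))
          else (if A x x = 0 then (x, GType.chi) else (x, GType.psi))).1 ∈ ({x, y, z} : Set V)
      split_ifs <;> first | exact Or.inl rfl | exact Or.inr (Or.inr rfl)
    · show (if A y y = 1 then (y, GType.chi) else (y, GType.psi)).1 ∈ ({x, y, z} : Set V)
      split_ifs <;> exact Or.inr (Or.inl rfl)
  have heC : ∀ i, e i ∉ C := fun i hiC => hiC.2 (hvert i)
  have hfq := Submodule.ker_liftQ_eq_bot (span (ZMod 2) (iasCol A '' C)) qmap hsle hkle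
  have hfano : ∀ S : Set (Fin 7),
      LinearIndependent (ZMod 2) (fun p : S => fanoCol p.1) ↔
        LinearIndependent (ZMod 2)
          (fun p : S => (span (ZMod 2) (iasCol A '' C)).mkQ (iasCol A (e p.1))) := by
    intro S
    have hcomp : (fun p : S => fanoCol p.1) =
        (Submodule.liftQ (span (ZMod 2) (iasCol A '' C)) qmap hsle) ∘
          (fun p : S => (span (ZMod 2) (iasCol A '' C)).mkQ (iasCol A (e p.1))) := by
      funext p
      rw [Function.comp_apply, Submodule.mkQ_apply, Submodule.liftQ_apply]
      exact (hqe p.1).symm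
    rw [hcomp]
    exact LinearMap.linearIndependent_iff _ hfq
  refine ⟨⟨C, e, heinj, heC, hfano⟩, ?_⟩
  intro hreg
  obtain ⟨c, hc⟩ := hreg ℚ
  have hC2 : LinearIndependent (ZMod 2) (fun p : C => iasCol A p.1) := by
    have hbase : LinearIndependent (ZMod 2) (fun v : V => iasCol A (v, GType.phi)) := by
      rw [Fintype.linearIndependent_iff]
      intro g hg v
      have hgv := congrFun hg v
      rw [Finset.sum_apply] at hgv
      have hterm : ∀ v' : V, (g v' • iasCol A (v', GType.phi)) v =
          if v = v' then g v' else 0 := by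
        intro v'
        by_cases h : v = v' <;> simp [iasCol, h]
      rw [Finset.sum_congr rfl (fun v' _ => hterm v'), Finset.sum_ite_eq] at hgv
      simpa using hgv
    have hfam : (fun p : C => iasCol A p.1) =
        fun p : C => iasCol A ((p : V × GType).1, GType.phi) := by
      funext p
      rw [show (p : V × GType) = ((p : V × GType).1, GType.phi) from Prod.ext rfl p.2.1]
    rw [hfam]
    exact hbase.comp (fun p : C => (p : V × GType).1) (by
      intro p p' h
      apply Subtype.ext
      exact Prod.ext h (p.2.1.trans p'.2.1.symm))
  have hCQ : LinearIndependent ℚ (fun p : C => c p.1) := (hc C).mpr hC2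
  have hrepQ : ∀ S : Set (Fin 7),
      LinearIndependent ℚ (fun p : S => (span ℚ (c '' C)).mkQ (c (e p.1))) ↔
        LinearIndependent (ZMod 2) (fun p : S => fanoCol p.1) := by
    intro S
    refine (union_indep_iff c C hCQ e S heinj heC).trans ?_
    refine (hc (e '' S ∪ C)).trans ?_
    exact ((union_indep_iff (iasCol A) C hC2 e S heinj heC).symm).trans (hfano S).symm
  exact fano_not_rep (by norm_num) (fun i => (span ℚ (c '' C)).mkQ (c (e i))) hrepQ

end Part2

end Aux

/-- if every connected component of `G` has at most two vertices then
`M(IAS(G))` is regular; and if some component has at least three vertices then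
`M(IAS(G))` has a Fano minor and hence is not regular. -/
theorem isotropic_matroid_regular_iff {V : Type} [Fintype V] [DecidableEq V]
    (A : Matrix V V (ZMod 2)) (hA : A.IsSymm) :
    ((∀ v : V, {w : V | Relation.ReflTransGen (GAdj A) v w}.ncard ≤ 2) →
      IsRegularRep (iasCol A)) ∧
    ((∃ v : V, 3 ≤ {w : V | Relation.ReflTransGen (GAdj A) v w}.ncard) →
      HasFanoMinorRep (iasCol A) ∧ ¬ IsRegularRep (iasCol A)) := by
  constructor
  · exact part1 A hA
  · intro hbig
    exact part2main A hA hbig
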